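/- Consider the stationary Gaussian model X_1 ~ N(0, σ_N² / (1−β²)), Y_1 = α X_1 + N_{Y,1}, X_2 = β X_1 + N_{X,2}, Y_2 = α X_2 + N_{Y,2}, with N_{X,2} ~ N(0, σ_N²) and N_{Y,1}, N_{Y,2} i.i.d. N(0, σ_Y²), all noises independent of X_1 and of each other, |β| < 1. Then the partial covariance of S_X = X_1 + X_2 with Y_1 given S_Y = Y_1 + Y_2, namely Cov(S_X, Y_1) − Cov(S_X, S_Y)·Cov(Y_1, S_Y)/Var(S_Y), equals 0; the same holds with Y_2 in place of Y_1. -/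

import Mathlib

open MeasureTheory ProbabilityTheory Real Set
open scoped NNReal ENNReal

lemma myGaussMean (v : ℝ≥0) : ∫ x, x ∂(gaussianReal 0 v) = 0 := by
  have hmap : Measure.map (fun x => (-1 : ℝ) * x) (gaussianReal 0 v) = gaussianReal 0 v := by
    rw [gaussianReal_map_const_mul]
    congr 1
    · ring
    · ext : 1
      norm_num
  have h := integral_map (μ := gaussianReal 0 v) (φ := fun x => (-1 : ℝ) * x)
    (f := fun x : ℝ => x) (by fun_prop) aestronglyMeasurable_id
  rw [hmap] at h
  rw [integral_const_mul] at h
  linarith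

lemma myGaussIntSq (v : ℝ≥0) :
    Integrable (fun x : ℝ => x ^ 2) (gaussianReal 0 v) := by
  rcases eq_or_ne v 0 with rfl | hv
  · rw [gaussianReal_zero_var]
    exact (integrable_const ((0:ℝ)^2)).congr (ae_eq_dirac (fun x : ℝ => x ^ 2)).symm
  have hvpos : (0 : ℝ) < v := by positivity
  rw [gaussianReal_of_var_ne_zero 0 hv,
    integrable_withDensity_iff (measurable_gaussianPDF _ _)
      (ae_of_all _ fun x => ENNReal.ofReal_lt_top)]
  have hb : (0 : ℝ) < (2 * (v : ℝ))⁻¹ := by positivity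
  have key := (integrable_rpow_mul_exp_neg_mul_sq hb (by norm_num : (-1:ℝ) < 2)).const_mul
    ((√(2 * π * v))⁻¹)
  refine key.congr (ae_of_all _ fun x => ?_)
  simp only [gaussianPDF_def, gaussianPDFReal]
  rw [ENNReal.toReal_ofReal (by positivity)]
  rw [rpow_two, show -(x - 0) ^ 2 / (2 * (v:ℝ)) = -(2 * (v:ℝ))⁻¹ * x ^ 2 by ring]
  ring

lemma myGaussMemL2 (v : ℝ≥0) : MemLp (fun x : ℝ => x) 2 (gaussianReal 0 v) :=
  (memLp_two_iff_integrable_sq aestronglyMeasurable_id).mpr (myGaussIntSq v)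

lemma myGaussVar (v : ℝ≥0) : ∫ x, x ^ 2 ∂(gaussianReal 0 v) = v := by
  rcases eq_or_ne v 0 with rfl | hv
  · rw [gaussianReal_zero_var]
    simp
  have hvpos : (0 : ℝ) < v := by positivity
  have hb : (0 : ℝ) < (2 * (v : ℝ))⁻¹ := by positivity
  set b : ℝ := (2 * (v : ℝ))⁻¹ with hbdef
  rw [gaussianReal_of_var_ne_zero 0 hv]
  have hdens : (volume : Measure ℝ).withDensity (gaussianPDF 0 v)
      = (volume : Measure ℝ).withDensity
          (fun x => ((gaussianPDFReal 0 v x).toNNReal : ℝ≥0∞)) := rfl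
  rw [hdens, integral_withDensity_eq_integral_smul
      ((measurable_gaussianPDFReal 0 v).real_toNNReal) _]
  have hpt : ∀ x : ℝ, (gaussianPDFReal 0 v x).toNNReal • (x ^ 2 : ℝ)
      = (√(2 * π * v))⁻¹ * (x ^ 2 * rexp (-b * x ^ 2)) := by
    intro x
    rw [NNReal.smul_def, Real.coe_toNNReal _ (gaussianPDFReal_nonneg _ _ _), gaussianPDFReal,
      show -(x - 0) ^ 2 / (2 * (v:ℝ)) = -b * x ^ 2 by rw [hbdef]; ring, smul_eq_mul]
    ring
  simp_rw [hpt]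
  rw [integral_const_mul]
  have habs : ∫ x : ℝ, x ^ 2 * rexp (-b * x ^ 2)
      = 2 * ∫ x in Ioi (0:ℝ), x ^ 2 * rexp (-b * x ^ 2) := by
    have h := integral_comp_abs (f := fun y : ℝ => y ^ 2 * rexp (-b * y ^ 2))
    simpa [sq_abs] using h
  rw [habs]
  have hIoi : ∫ x in Ioi (0:ℝ), x ^ 2 * rexp (-b * x ^ 2)
      = b ^ (-((2:ℝ) + 1) / 2) * (1 / 2) * Real.Gamma (((2:ℝ) + 1) / 2) := by
    rw [← integral_rpow_mul_exp_neg_mul_rpow two_pos (by norm_num : (-1:ℝ) < 2) hb]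
    refine setIntegral_congr_fun measurableSet_Ioi fun x hx => ?_
    rw [rpow_two]
  rw [hIoi]
  have hGamma : Real.Gamma (((2:ℝ) + 1) / 2) = (1 / 2) * √π := by
    rw [show ((2:ℝ) + 1) / 2 = 1 / 2 + 1 by norm_num, Real.Gamma_add_one (by norm_num),
      Real.Gamma_one_half_eq]
  rw [hGamma]
  have hbpow : b ^ (-((2:ℝ) + 1) / 2) = (2 * (v:ℝ)) * √(2 * (v:ℝ)) := by
    rw [hbdef, show (-((2:ℝ) + 1) / 2 : ℝ) = -(1 + 1/2) by norm_num,
      Real.rpow_neg (by positivity), Real.inv_rpow (by positivity), inv_inv,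
      Real.rpow_add (by positivity), Real.rpow_one, ← Real.sqrt_eq_rpow]
  rw [hbpow]
  have hsqrt : √(2 * π * (v:ℝ)) = √(2 * (v:ℝ)) * √π := by
    rw [show 2 * π * (v:ℝ) = (2 * (v:ℝ)) * π by ring, Real.sqrt_mul (by positivity)]
  rw [hsqrt]
  have hs : (0:ℝ) < √(2 * (v:ℝ)) := Real.sqrt_pos.mpr (by positivity)
  have hp : (0:ℝ) < √π := Real.sqrt_pos.mpr pi_pos
  field_simp

/-- Covariance of two real random variables. -/
noncomputable def cov {Ω : Type*} [MeasurableSpace Ω] (μ : MeasureTheory.Measure Ω)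
    (A B : Ω → ℝ) : ℝ :=
  ∫ ω, (A ω - ∫ x, A x ∂μ) * (B ω - ∫ x, B x ∂μ) ∂μ


lemma myL2mul {Ω : Type*} [MeasurableSpace Ω] {μ : Measure Ω} {f g : Ω → ℝ}
    (hf : MemLp f 2 μ) (hg : MemLp g 2 μ) :
    Integrable (fun ω => f ω * g ω) μ := by
  have h := (((hf.add hg).integrable_sq.sub hf.integrable_sq).sub hg.integrable_sq).div_const 2
  refine h.congr (ae_of_all _ fun ω => ?_)
  simp only [Pi.sub_apply, Pi.add_apply, Pi.pow_apply]
  ring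

lemma cov_sum {Ω : Type*} [MeasurableSpace Ω] (μ : Measure Ω) [IsProbabilityMeasure μ]
    (W : Fin 4 → Ω → ℝ) (v : Fin 4 → ℝ≥0)
    (hm : ∀ i, Measurable (W i))
    (hd : ∀ i, Measure.map (W i) μ = gaussianReal 0 (v i))
    (hindep : iIndepFun W μ)
    (a b : Fin 4 → ℝ) :
    cov μ (fun ω => ∑ i, a i * W i ω) (fun ω => ∑ i, b i * W i ω)
      = ∑ i, a i * b i * (v i : ℝ) := by
  have hL2 : ∀ i, MemLp (W i) 2 μ := by
    intro i
    have := (memLp_map_measure_iff (f := W i) (g := fun x : ℝ => x)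
      aestronglyMeasurable_id (hm i).aemeasurable).mp (by rw [hd i]; exact myGaussMemL2 (v i))
    exact this
  have hInt : ∀ i, Integrable (W i) μ := fun i => (hL2 i).integrable one_le_two
  have hmean : ∀ i, ∫ ω, W i ω ∂μ = 0 := by
    intro i
    have h := integral_map (μ := μ) (hm i).aemeasurable
      (f := fun x : ℝ => x) aestronglyMeasurable_id
    rw [hd i, myGaussMean] at h
    exact h.symm
  have hprod : ∀ i j, ∫ ω, W i ω * W j ω ∂μ = if i = j then (v i : ℝ) else 0 := by
    intro i j
    rcases eq_or_ne i j with rfl | hij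
    · have h := integral_map (μ := μ) (hm i).aemeasurable
        (f := fun x : ℝ => x ^ 2) (by fun_prop)
      rw [hd i, myGaussVar] at h
      rw [if_pos rfl]
      have h2 : ∫ ω, W i ω * W i ω ∂μ = ∫ ω, (W i ω) ^ 2 ∂μ :=
        integral_congr_ae (ae_of_all _ fun ω => by ring)
      rw [h2]
      simpa using h.symm
    · rw [if_neg hij]
      have h := (hindep.indepFun hij).integral_mul_eq_mul_integral (hInt i).aestronglyMeasurable (hInt j).aestronglyMeasurable
      have h2 : ∫ ω, W i ω * W j ω ∂μ = integral μ (W i * W j) := rfl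
      rw [h2, h, hmean i, hmean j, mul_zero]
  have hIntMul : ∀ i j, Integrable (fun ω => W i ω * W j ω) μ :=
    fun i j => myL2mul (hL2 i) (hL2 j)
  have hmeanA : ∀ c : Fin 4 → ℝ, ∫ ω, ∑ i, c i * W i ω ∂μ = 0 := by
    intro c
    rw [integral_finset_sum _ (fun i _ => (hInt i).const_mul (c i))]
    simp [integral_const_mul, hmean]
  rw [cov, hmeanA, hmeanA]
  simp only [sub_zero]
  have hexp : ∀ ω, (∑ i, a i * W i ω) * (∑ j, b j * W j ω)
      = ∑ i, ∑ j, (a i * b j) * (W i ω * W j ω) := by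
    intro ω
    rw [Finset.sum_mul_sum]
    exact Finset.sum_congr rfl fun i _ => Finset.sum_congr rfl fun j _ => by ring
  simp_rw [hexp]
  rw [integral_finset_sum _ (fun i _ =>
    integrable_finset_sum _ (fun j _ => (hIntMul i j).const_mul _))]
  have : ∀ i, ∫ ω, ∑ j, (a i * b j) * (W i ω * W j ω) ∂μ = a i * b i * (v i : ℝ) := by
    intro i
    rw [integral_finset_sum _ (fun j _ => (hIntMul i j).const_mul _)]
    have : ∀ j, ∫ ω, (a i * b j) * (W i ω * W j ω) ∂μ
        = (a i * b j) * if i = j then (v i : ℝ) else 0 := by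
      intro j
      rw [integral_const_mul, hprod]
    simp_rw [this]
    simp [Finset.sum_ite_eq, mul_ite]
  simp_rw [this]

lemma var_eq_cov {Ω : Type*} [MeasurableSpace Ω] (μ : Measure Ω) [IsProbabilityMeasure μ]
    (f : Ω → ℝ) (hf : MemLp f 2 μ) : variance f μ = cov μ f f := by
  rw [variance_eq_integral hf.aemeasurable, cov]
  congr 1
  funext ω
  ring

/-- In the stationary Gaussian model `X₁ ~ N(0, σ_N²/(1−β²))`,
`Y₁ = α X₁ + N_{Y,1}`, `X₂ = β X₁ + N_{X,2}`, `Y₂ = α X₂ + N_{Y,2}`, with independent Gaussian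
noises and `|β| < 1`, the partial covariance of `S_X = X₁ + X₂` with `Y₁` given
`S_Y = Y₁ + Y₂` is zero, and likewise with `Y₂` in place of `Y₁`. -/
theorem stmt13 {Ω : Type*} [MeasurableSpace Ω] (μ : Measure Ω) [IsProbabilityMeasure μ]
    (α β : ℝ) (hβ : |β| < 1) (σN σY : NNReal) (hσN : 0 < σN) (hσY : 0 < σY)
    (vX : NNReal) (hvX : (vX : ℝ) * (1 - β ^ 2) = (σN : ℝ) ^ 2)
    (X₁ X₂ Y₁ Y₂ NX₂ NY₁ NY₂ : Ω → ℝ)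
    (hX₁m : Measurable X₁) (hNX₂m : Measurable NX₂)
    (hNY₁m : Measurable NY₁) (hNY₂m : Measurable NY₂)
    (hX₁d : Measure.map X₁ μ = gaussianReal 0 vX)
    (hNX₂d : Measure.map NX₂ μ = gaussianReal 0 (σN ^ 2))
    (hNY₁d : Measure.map NY₁ μ = gaussianReal 0 (σY ^ 2))
    (hNY₂d : Measure.map NY₂ μ = gaussianReal 0 (σY ^ 2))
    (hindep : iIndepFun ![X₁, NX₂, NY₁, NY₂] μ)
    (hY₁ : ∀ ω, Y₁ ω = α * X₁ ω + NY₁ ω)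
    (hX₂ : ∀ ω, X₂ ω = β * X₁ ω + NX₂ ω)
    (hY₂ : ∀ ω, Y₂ ω = α * X₂ ω + NY₂ ω) :
    (cov μ (fun ω => X₁ ω + X₂ ω) Y₁ -
      cov μ (fun ω => X₁ ω + X₂ ω) (fun ω => Y₁ ω + Y₂ ω) *
        cov μ Y₁ (fun ω => Y₁ ω + Y₂ ω) / variance (fun ω => Y₁ ω + Y₂ ω) μ = 0) ∧
    (cov μ (fun ω => X₁ ω + X₂ ω) Y₂ -
      cov μ (fun ω => X₁ ω + X₂ ω) (fun ω => Y₁ ω + Y₂ ω) *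
        cov μ Y₂ (fun ω => Y₁ ω + Y₂ ω) / variance (fun ω => Y₁ ω + Y₂ ω) μ = 0) := by
  set W : Fin 4 → Ω → ℝ := ![X₁, NX₂, NY₁, NY₂] with hW
  set v4 : Fin 4 → ℝ≥0 := ![vX, σN ^ 2, σY ^ 2, σY ^ 2] with hv4
  have hm : ∀ i, Measurable (W i) := by
    intro i
    fin_cases i <;> simpa [hW] using ‹_›
  have hd : ∀ i, Measure.map (W i) μ = gaussianReal 0 (v4 i) := by
    intro i
    fin_cases i <;> simp [hW, hv4] <;> assumption
  have key := cov_sum μ W v4 hm hd hindep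
  -- coefficient vectors
  set aSX : Fin 4 → ℝ := ![1 + β, 1, 0, 0] with haSX
  set aY1 : Fin 4 → ℝ := ![α, 0, 1, 0] with haY1
  set aY2 : Fin 4 → ℝ := ![α * β, α, 0, 1] with haY2
  set aSY : Fin 4 → ℝ := ![α * (1 + β), α, 1, 1] with haSY
  have hSX : (fun ω => X₁ ω + X₂ ω) = (fun ω => ∑ i, aSX i * W i ω) := by
    funext ω
    simp [haSX, hW, Fin.sum_univ_four, hX₂ ω]
    ring
  have hY1f : Y₁ = (fun ω => ∑ i, aY1 i * W i ω) := by
    funext ω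
    simp [haY1, hW, Fin.sum_univ_four, hY₁ ω]
  have hY2f : Y₂ = (fun ω => ∑ i, aY2 i * W i ω) := by
    funext ω
    simp [haY2, hW, Fin.sum_univ_four, hY₂ ω, hX₂ ω]
    ring
  have hSY : (fun ω => Y₁ ω + Y₂ ω) = (fun ω => ∑ i, aSY i * W i ω) := by
    funext ω
    simp [haSY, hW, Fin.sum_univ_four, hY₁ ω, hY₂ ω, hX₂ ω]
    ring
  have hval : ∀ a b : Fin 4 → ℝ, (∑ i, a i * b i * (v4 i : ℝ))
      = a 0 * b 0 * (vX : ℝ) + a 1 * b 1 * (σN : ℝ) ^ 2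
        + a 2 * b 2 * (σY : ℝ) ^ 2 + a 3 * b 3 * (σY : ℝ) ^ 2 := by
    intro a b
    simp only [Fin.sum_univ_four, hv4, Matrix.cons_val_zero, Matrix.cons_val_one,
      Matrix.head_cons, Matrix.cons_val_two, Matrix.tail_cons, Matrix.cons_val_three]
    push_cast
    ring
  -- MemLp for the variance
  have hL2 : ∀ i, MemLp (W i) 2 μ := by
    intro i
    have := (memLp_map_measure_iff (f := W i) (g := fun x : ℝ => x)
      aestronglyMeasurable_id (hm i).aemeasurable).mp (by rw [hd i]; exact myGaussMemL2 (v4 i))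
    exact this
  have hSYL2 : MemLp (fun ω => ∑ i, aSY i * W i ω) 2 μ := by
    have h := memLp_finset_sum' (μ := μ) (p := 2) Finset.univ
      (f := fun i => fun ω => aSY i * W i ω) (fun i _ => (hL2 i).const_mul (aSY i))
    convert h using 1
    exact (Finset.sum_fn _ _).symm
  have hVar : variance (fun ω => Y₁ ω + Y₂ ω) μ
      = ∑ i, aSY i * aSY i * (v4 i : ℝ) := by
    rw [hSY, var_eq_cov μ _ hSYL2, key]
  -- numeric values
  have hσYpos : (0 : ℝ) < (σY : ℝ) := hσY
  have hVpos : 0 < ∑ i, aSY i * aSY i * (v4 i : ℝ) := by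
    rw [hval]
    simp only [haSY, Matrix.cons_val_zero, Matrix.cons_val_one, Matrix.head_cons,
      Matrix.cons_val_two, Matrix.tail_cons, Matrix.cons_val_three]
    nlinarith [NNReal.coe_nonneg vX, NNReal.coe_nonneg σN, sq_nonneg (α * (1 + β)), sq_nonneg α,
      mul_pos hσYpos hσYpos]
  constructor
  · rw [hVar, hSY, hSX, hY1f, key, key, key, sub_eq_zero, eq_div_iff hVpos.ne', hval, hval, hval,
      hval]
    simp only [haSX, haY1, haSY]
    simp only [Matrix.cons_val_zero, Matrix.cons_val_one, Matrix.head_cons,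
      Matrix.cons_val_two, Matrix.tail_cons, Matrix.cons_val_three]
    linear_combination (α * (σY : ℝ) ^ 2) * hvX
  · rw [hVar, hSY, hSX, hY2f, key, key, key, sub_eq_zero, eq_div_iff hVpos.ne', hval, hval, hval,
      hval]
    simp only [haSX, haY2, haSY]
    simp only [Matrix.cons_val_zero, Matrix.cons_val_one, Matrix.head_cons,
      Matrix.cons_val_two, Matrix.tail_cons, Matrix.cons_val_three]
    linear_combination (-(α * (σY : ℝ) ^ 2)) * hvX
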